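/- Let α = (α_i)_{i≥0} be the integer sequence with α_i = 3 - i, and consider the generalized Pascal triangle P_{α,α}(n). Then for every positive integer n, det(P_{α,α}(n)) = F(2n+2), where F denotes the Fibonacci sequence with F(0) = 0, F(1) = 1. -/

import Mathlib

open Matrix

/-- Entry `P_{i,j}` of the generalized Pascal triangle associated to sequences `α`, `β`:
`P_{i,0} = α i`, `P_{0,j} = β j`, and `P_{i,j} = P_{i-1,j} + P_{i,j-1}` for `i, j ≥ 1`. -/
def pascalEntry {R : Type*} [CommRing R] (α β : ℕ → R) : ℕ → ℕ → R
  | i, 0 => α i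
  | 0, j + 1 => β (j + 1)
  | i + 1, j + 1 => pascalEntry α β i (j + 1) + pascalEntry α β (i + 1) j

/-- The generalized Pascal triangle `P_{α,β}(n)`. -/
def genPascal {R : Type*} [CommRing R] (α β : ℕ → R) (n : ℕ) :
    Matrix (Fin n) (Fin n) R :=
  Matrix.of fun i j => pascalEntry α β (i : ℕ) (j : ℕ)

/-- The Töplitz matrix `T_{α,β}(n)`: `t_{i,j} = α_{i-j}` if `i ≥ j`, else `β_{j-i}`. -/
def toeplitz {R : Type*} [CommRing R] (α β : ℕ → R) (n : ℕ) :
    Matrix (Fin n) (Fin n) R :=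
  Matrix.of fun i j => if (j : ℕ) ≤ (i : ℕ) then α ((i : ℕ) - (j : ℕ)) else β ((j : ℕ) - (i : ℕ))

/-- The unipotent lower triangular matrix `L(n)` with `L_{i,j} = C(i,j)` for `i ≥ j`. -/
def lowerL (R : Type*) [CommRing R] (n : ℕ) : Matrix (Fin n) (Fin n) R :=
  Matrix.of fun i j => if (j : ℕ) ≤ (i : ℕ) then ((i : ℕ).choose (j : ℕ) : R) else 0

/-- The binomial inverse transform `α̂_i = ∑_{k=0}^{i} (-1)^{i+k} C(i,k) α_k`. -/
def hatSeq {R : Type*} [CommRing R] (α : ℕ → R) (i : ℕ) : R :=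
  ∑ k ∈ Finset.range (i + 1), (-1 : R) ^ (i + k) * (i.choose k : R) * α k

/-- The binomial transform `α̌_i = ∑_{k=0}^{i} C(i,k) α_k`. -/
def checkSeq {R : Type*} [CommRing R] (α : ℕ → R) (i : ℕ) : R :=
  ∑ k ∈ Finset.range (i + 1), (i.choose k : R) * α k

lemma vdm (i : ℕ) : ∀ j s : ℕ,
    ∑ l ∈ Finset.range (j+1), i.choose (l+s) * j.choose l = (i+j).choose (j+s) := by
  intro j
  induction j with
  | zero => intro s; simp
  | succ j ih =>
    intro s
    have h1 : ∑ m ∈ Finset.range (j+1), i.choose (m+1+s) * j.choose m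
        = (i+j).choose (j+(s+1)) := by
      rw [← ih (s+1)]
      exact Finset.sum_congr rfl fun m _ => by rw [show m+1+s = m+(s+1) from by omega]
    have h2 : (∑ m ∈ Finset.range (j+1), i.choose (m+1+s) * j.choose (m+1)) + i.choose s
        = (i+j).choose (j+s) := by
      have hext : ∑ l ∈ Finset.range (j+1+1), i.choose (l+s) * j.choose l
          = ∑ l ∈ Finset.range (j+1), i.choose (l+s) * j.choose l := by
        rw [Finset.sum_range_succ, Nat.choose_succ_self, Nat.mul_zero, Nat.add_zero]
      rw [← ih s, ← hext]
      conv_rhs => rw [Finset.sum_range_succ']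
      simp
    calc ∑ l ∈ Finset.range (j+1+1), i.choose (l+s) * (j+1).choose l
        = (∑ m ∈ Finset.range (j+1), i.choose (m+1+s) * (j.choose m + j.choose (m+1)))
            + i.choose s := by
          rw [Finset.sum_range_succ']
          simp [Nat.choose_succ_succ]
      _ = (∑ m ∈ Finset.range (j+1), i.choose (m+1+s) * j.choose m)
            + ((∑ m ∈ Finset.range (j+1), i.choose (m+1+s) * j.choose (m+1)) + i.choose s) := by
          simp [Nat.mul_add, Finset.sum_add_distrib]; ring
      _ = (i+j).choose (j+(s+1)) + (i+j).choose (j+s) := by rw [h1, h2]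
      _ = (i+(j+1)).choose ((j+1)+s) := by
          rw [show i+(j+1) = (i+j)+1 from by omega, show (j+1)+s = (j+s)+1 from by omega,
            Nat.choose_succ_succ, show j+(s+1) = j+s+1 from by omega, Nat.add_comm]


def ttZ (k l : ℕ) : ℤ :=
  3 * (if k = l then 1 else 0) - (if k = l + 1 then 1 else 0) - (if l = k + 1 then 1 else 0)

lemma vdm' (i j n s : ℕ) (hj : j < n) :
    ∑ l ∈ Finset.range n, i.choose (l+s) * j.choose l = (i+j).choose (j+s) := by
  rw [← vdm i j s]
  refine (Finset.sum_subset (Finset.range_subset_range.2 hj) ?_).symm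
  intro x hx hnx
  simp only [Finset.mem_range] at hx hnx
  rw [Nat.choose_eq_zero_of_lt (show j < x by omega), Nat.mul_zero]

lemma key (n i j : ℕ) (hi : i < n) (hj : j < n) :
    ∑ l ∈ Finset.range n, (∑ k ∈ Finset.range n, (i.choose k : ℤ) * ttZ k l) * (j.choose l : ℤ)
      = 3 * ((i+j).choose i : ℤ) - ((i+j).choose (j+1) : ℤ) - ((i+j).choose (i+1) : ℤ) := by
  have expand : ∀ l, (∑ k ∈ Finset.range n, (i.choose k : ℤ) * ttZ k l)
      = (3 * ∑ k ∈ Finset.range n, (i.choose k : ℤ) * (if k = l then 1 else 0))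
        - (∑ k ∈ Finset.range n, (i.choose k : ℤ) * (if k = l + 1 then 1 else 0))
        - (∑ k ∈ Finset.range n, (i.choose k : ℤ) * (if l = k + 1 then 1 else 0)) := by
    intro l
    rw [Finset.mul_sum, ← Finset.sum_sub_distrib, ← Finset.sum_sub_distrib]
    exact Finset.sum_congr rfl fun k _ => by simp only [ttZ]; ring
  have e1 : ∀ l, (∑ k ∈ Finset.range n, (i.choose k : ℤ) * (if k = l then 1 else 0))
      = if l ∈ Finset.range n then (i.choose l : ℤ) else 0 := by
    intro l
    simp only [mul_ite, mul_one, mul_zero]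
    exact Finset.sum_ite_eq' (Finset.range n) l _
  have e2 : ∀ l, (∑ k ∈ Finset.range n, (i.choose k : ℤ) * (if k = l + 1 then 1 else 0))
      = (i.choose (l+1) : ℤ) := by
    intro l
    simp only [mul_ite, mul_one, mul_zero]
    rw [Finset.sum_ite_eq' (Finset.range n) (l+1) _]
    split_ifs with h
    · rfl
    · simp only [Finset.mem_range, not_lt] at h
      rw [Nat.choose_eq_zero_of_lt (by omega)]
      norm_num
  have e3 : ∀ k ∈ Finset.range n, (∑ l ∈ Finset.range n, (if l = k + 1 then (j.choose l : ℤ) else 0))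
      = (j.choose (k+1) : ℤ) := by
    intro k _
    rw [Finset.sum_ite_eq' (Finset.range n) (k+1) _]
    split_ifs with h
    · rfl
    · simp only [Finset.mem_range, not_lt] at h
      rw [Nat.choose_eq_zero_of_lt (by omega)]
      norm_num
  calc ∑ l ∈ Finset.range n, (∑ k ∈ Finset.range n, (i.choose k : ℤ) * ttZ k l) * (j.choose l : ℤ)
      = ∑ l ∈ Finset.range n,
          ((3 * (i.choose l : ℤ) - (i.choose (l+1) : ℤ)) * (j.choose l : ℤ)
            - ∑ k ∈ Finset.range n, (i.choose k : ℤ) * (if l = k + 1 then (j.choose l : ℤ) else 0)) := by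
        refine Finset.sum_congr rfl fun l hl => ?_
        rw [expand l, e1 l, e2 l, if_pos hl, sub_mul, sub_mul, Finset.sum_mul]
        congr 1
        refine Finset.sum_congr rfl fun k _ => ?_
        simp only [mul_ite, mul_zero, ite_mul, zero_mul, mul_assoc, one_mul]
      _ = (∑ l ∈ Finset.range n, (3 * (i.choose l : ℤ) - (i.choose (l+1) : ℤ)) * (j.choose l : ℤ))
            - ∑ k ∈ Finset.range n, (i.choose k : ℤ) * (j.choose (k+1) : ℤ) := by
        rw [Finset.sum_sub_distrib]
        congr 1
        rw [Finset.sum_comm]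
        refine Finset.sum_congr rfl fun k hk => ?_
        rw [← Finset.mul_sum, e3 k hk]
      _ = 3 * ((i+j).choose i : ℤ) - ((i+j).choose (j+1) : ℤ) - ((i+j).choose (i+1) : ℤ) := by
        have A : ∑ l ∈ Finset.range n, (i.choose l : ℤ) * (j.choose l : ℤ) = ((i+j).choose j : ℤ) := by
          have := vdm' i j n 0 hj
          simp only [Nat.add_zero] at this
          exact_mod_cast congrArg (Nat.cast : ℕ → ℤ) this
        have B : ∑ l ∈ Finset.range n, (i.choose (l+1) : ℤ) * (j.choose l : ℤ)
            = ((i+j).choose (j+1) : ℤ) := by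
          exact_mod_cast congrArg (Nat.cast : ℕ → ℤ) (vdm' i j n 1 hj)
        have C : ∑ k ∈ Finset.range n, (i.choose k : ℤ) * (j.choose (k+1) : ℤ)
            = ((i+j).choose (i+1) : ℤ) := by
          have := vdm' j i n 1 hi
          have := congrArg (Nat.cast : ℕ → ℤ) this
          push_cast at this ⊢
          rw [show j + i = i + j from by omega] at this
          rw [← this]
          exact Finset.sum_congr rfl fun k _ => by ring
        have hD : (i+j).choose j = (i+j).choose i := by
          rw [← Nat.choose_symm (Nat.le_add_left j i)]
          congr 1
          omega
        have D : ((i+j).choose j : ℤ) = ((i+j).choose i : ℤ) := Nat.cast_inj.2 hD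
        have A' : ∑ x ∈ Finset.range n, 3 * (i.choose x : ℤ) * (j.choose x : ℤ)
            = 3 * ((i+j).choose j : ℤ) := by
          rw [← A, Finset.mul_sum]
          exact Finset.sum_congr rfl fun x _ => by ring
        simp only [sub_mul, Finset.sum_sub_distrib]
        rw [A', B, C, D]

lemma pascal_closed (i j : ℕ) :
    pascalEntry (fun i => 3 - (i : ℤ)) (fun i => 3 - (i : ℤ)) i j
      = 3 * ((i+j).choose i : ℤ) - ((i+j).choose (j+1) : ℤ) - ((i+j).choose (i+1) : ℤ) := by
  induction i generalizing j with
  | zero =>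
    cases j with
    | zero => simp [pascalEntry]
    | succ j =>
      simp [pascalEntry, Nat.choose_eq_zero_of_lt (Nat.lt_succ_self (j+1))]
  | succ i ih =>
    induction j with
    | zero =>
      simp [pascalEntry, Nat.choose_eq_zero_of_lt (Nat.lt_succ_self (i+1)), Nat.choose_one_right]
    | succ j ihj =>
      rw [pascalEntry, ih (j+1), ihj]
      simp only [show i + (j+1) = i+j+1 from by omega, show (i+1)+j = i+j+1 from by omega,
        show (i+1)+(j+1) = i+j+1+1 from by omega,
        show (i+j+1+1).choose (i+1) = (i+j+1).choose i + (i+j+1).choose (i+1) from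
          Nat.choose_succ_succ _ _,
        show (i+j+1+1).choose (j+1+1) = (i+j+1).choose (j+1) + (i+j+1).choose (j+1+1) from
          Nat.choose_succ_succ _ _,
        show (i+j+1+1).choose (i+1+1) = (i+j+1).choose (i+1) + (i+j+1).choose (i+1+1) from
          Nat.choose_succ_succ _ _]
      push_cast
      ring

def Tm (n : ℕ) : Matrix (Fin n) (Fin n) ℤ := Matrix.of fun k l => ttZ k l

def Lm (n : ℕ) : Matrix (Fin n) (Fin n) ℤ := Matrix.of fun i j => ((i : ℕ).choose (j : ℕ) : ℤ)

lemma factor (n : ℕ) :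
    genPascal (fun i => 3 - (i : ℤ)) (fun i => 3 - (i : ℤ)) n = Lm n * Tm n * (Lm n)ᵀ := by
  ext i j
  show pascalEntry _ _ (i : ℕ) (j : ℕ) = _
  rw [pascal_closed, ← key n i j i.isLt j.isLt]
  simp only [Matrix.mul_apply, Matrix.transpose_apply, Lm, Tm, Matrix.of_apply]
  rw [← Fin.sum_univ_eq_sum_range
    (fun l => (∑ k ∈ Finset.range n, ((i : ℕ).choose k : ℤ) * ttZ k l) * ((j : ℕ).choose l : ℤ)) n]
  refine Finset.sum_congr rfl fun l _ => ?_
  rw [← Fin.sum_univ_eq_sum_range (fun k => ((i : ℕ).choose k : ℤ) * ttZ k (l : ℕ)) n]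

lemma detLm (n : ℕ) : (Lm n).det = 1 := by
  rw [Matrix.det_of_lowerTriangular (Lm n) ?h]
  · simp [Lm, Nat.choose_self]
  · intro i j hij
    have : (i : ℕ) < (j : ℕ) := hij
    simp [Lm, Nat.choose_eq_zero_of_lt this]

lemma shiftT (n : ℕ) : (Tm (n+1)).submatrix Fin.succ Fin.succ = Tm n := by
  ext k l
  simp [Tm, ttZ, Matrix.submatrix_apply, Fin.val_succ]

lemma det_Tm_rec (n : ℕ) : (Tm (n+2)).det = 3 * (Tm (n+1)).det - (Tm n).det := by
  have hM1 : ((Tm (n+2)).submatrix Fin.succ (Fin.succ (0 : Fin (n+1))).succAbove).det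
      = -(Tm n).det := by
    set M : Matrix (Fin (n+1)) (Fin (n+1)) ℤ :=
      (Tm (n+2)).submatrix Fin.succ (Fin.succ (0 : Fin (n+1))).succAbove with hMdef
    rw [Matrix.det_succ_column_zero, Fin.sum_univ_succ]
    have hz : ∀ k : Fin n, M (Fin.succ k) 0 = 0 := by
      intro k
      simp only [hMdef, Matrix.submatrix_apply, Tm, ttZ, Matrix.of_apply]
      have h1 : ((Fin.succ (0 : Fin (n+1))).succAbove (0 : Fin (n+1)) : ℕ) = 0 := by
        simp [Fin.succAbove, Fin.lt_def]
      rw [h1]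
      simp [Fin.val_succ]
    have h00 : M 0 0 = -1 := by
      simp only [hMdef, Matrix.submatrix_apply, Tm, ttZ, Matrix.of_apply]
      have h1 : ((Fin.succ (0 : Fin (n+1))).succAbove (0 : Fin (n+1)) : ℕ) = 0 := by
        simp [Fin.succAbove, Fin.lt_def]
      rw [h1]
      simp [Fin.val_succ]
    have hsub : M.submatrix (Fin.succAbove 0) Fin.succ = Tm n := by
      ext k l
      simp only [hMdef, Matrix.submatrix_apply, Tm, ttZ, Matrix.of_apply, Fin.succAbove_zero]
      have h1 : ((Fin.succ (0 : Fin (n+1))).succAbove (Fin.succ l) : ℕ) = (l : ℕ) + 2 := by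
        simp [Fin.succAbove, Fin.lt_def]
      rw [h1]
      simp [Fin.val_succ]
    simp only [hz, mul_zero, zero_mul, Finset.sum_const_zero, add_zero]
    rw [h00, hsub]
    simp
  rw [Matrix.det_succ_row_zero, Fin.sum_univ_succ, Fin.sum_univ_succ]
  have hz2 : ∀ k : Fin n, (Tm (n+2)) 0 (Fin.succ (Fin.succ k)) = 0 := by
    intro k
    simp [Tm, ttZ, Fin.val_succ]
  have h00 : (Tm (n+2)) 0 0 = 3 := by simp [Tm, ttZ]
  have h01 : (Tm (n+2)) 0 (Fin.succ (0 : Fin (n+1))) = -1 := by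
    simp [Tm, ttZ, Fin.val_succ]
  have hm0 : (Tm (n+2)).submatrix Fin.succ (Fin.succAbove 0) = Tm (n+1) := by
    rw [Fin.succAbove_zero, shiftT]
  simp only [hz2, mul_zero, zero_mul, Finset.sum_const_zero, add_zero]
  rw [h00, h01, hm0, hM1]
  simp [Fin.val_succ]
  ring

lemma detTm (n : ℕ) : (Tm n).det = (Nat.fib (2*n+2) : ℤ) := by
  have H : ∀ m : ℕ, (Tm m).det = (Nat.fib (2*m+2) : ℤ) ∧ (Tm (m+1)).det = (Nat.fib (2*m+4) : ℤ) := by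
    intro m
    induction m with
    | zero =>
      constructor
      · simp [Tm]
      · rw [Matrix.det_fin_one]
        simp [Tm, ttZ]
        decide
    | succ m ih =>
      refine ⟨by rw [show 2*(m+1)+2 = 2*m+4 from by ring]; exact ih.2, ?_⟩
      rw [show m+1+1 = m+2 from rfl, det_Tm_rec, ih.1, ih.2]
      have f1 := Nat.fib_add_two (n := 2*m+4)
      have f2 := Nat.fib_add_two (n := 2*m+3)
      have f3 := Nat.fib_add_two (n := 2*m+2)
      have g : 3 * Nat.fib (2*m+4) = Nat.fib (2*(m+1)+4) + Nat.fib (2*m+2) := by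
        ring_nf at f1 f2 f3 ⊢
        omega
      have := congrArg (Nat.cast : ℕ → ℤ) g
      push_cast at this
      linarith
  exact (H n).1

/-- for `α_i = 3 - i`, `det(P_{α,α}(n)) = F(2n+2)`. -/
theorem det_genPascal_fib_even (n : ℕ) (hn : 0 < n) :
    (genPascal (fun i => 3 - (i : ℤ)) (fun i => 3 - (i : ℤ)) n).det =
      (Nat.fib (2 * n + 2) : ℤ) := by
  rw [factor n, Matrix.det_mul, Matrix.det_mul, detLm, Matrix.det_transpose, detLm, detTm]
  ring
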